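/- Let F and G be overlapping masked IFSs whose critical itineraries agree (τ_F^-(q) = τ_G^-(p) and τ_F^+(q) = τ_G^+(p)). Then the fractal transformation h = π_G ∘ τ_F^+ : [0,1] → [0,1] is a homeomorphism. -/

import Mathlib

open Set Filter Topology

/-- Strict lexicographic order on binary strings. -/
def lexLt (σ ω : ℕ → Bool) : Prop :=
  ∃ k, (∀ j < k, σ j = ω j) ∧ σ k < ω k

/-- Lexicographic order on binary strings. -/
def lexLe (σ ω : ℕ → Bool) : Prop := lexLt σ ω ∨ σ = ω

/-- n-fold shift. -/
def shiftn (n : ℕ) (ω : ℕ → Bool) : ℕ → Bool := fun k => ω (k + n)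

/-- Plus dynamical system: boundary point goes to the 0-branch inverse `g1` side, i.e. `x ≥ q` uses `g1`. -/
noncomputable def Tplus (g0 g1 : ℝ → ℝ) (q : ℝ) (x : ℝ) : ℝ := if x < q then g0 x else g1 x

noncomputable def Tminus (g0 g1 : ℝ → ℝ) (q : ℝ) (x : ℝ) : ℝ := if x ≤ q then g0 x else g1 x

/-- Itinerary under the plus system. -/
noncomputable def tauPlus (g0 g1 : ℝ → ℝ) (q : ℝ) (x : ℝ) : ℕ → Bool :=
  fun n => decide (q ≤ (Tplus g0 g1 q)^[n] x)

/-- Itinerary under the minus system. -/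
noncomputable def tauMinus (g0 g1 : ℝ → ℝ) (q : ℝ) (x : ℝ) : ℕ → Bool :=
  fun n => decide (q < (Tminus g0 g1 q)^[n] x)

/-- Coding map of the uniform IFS with ratio `a`. -/
noncomputable def piU (a : ℝ) (ω : ℕ → Bool) : ℝ := (1 - a) * ∑' k : ℕ, (cond (ω k) (a ^ k) 0)

/-- `wordMap u0 u1 σ k = f_{σ|k} = f_{σ 0} ∘ ⋯ ∘ f_{σ k}`. -/
def wordMap (u0 u1 : ℝ → ℝ) (σ : ℕ → Bool) : ℕ → ℝ → ℝ
  | 0 => cond (σ 0) u1 u0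
  | (k+1) => fun x => wordMap u0 u1 σ k ((cond (σ (k+1)) u1 u0) x)

/-- Coding map of the IFS `(u0, u1)`. -/
noncomputable def piCode (u0 u1 : ℝ → ℝ) (σ : ℕ → Bool) : ℝ :=
  limUnder atTop (fun k => wordMap u0 u1 σ k 0)

/-- `h` is a homeomorphism of `[0,1]` onto itself. -/
def IsIccHomeo (h : ℝ → ℝ) : Prop :=
  ∃ h' : ℝ → ℝ, ContinuousOn h (Icc 0 1) ∧ ContinuousOn h' (Icc 0 1) ∧
    MapsTo h (Icc 0 1) (Icc 0 1) ∧ MapsTo h' (Icc 0 1) (Icc 0 1) ∧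
    (∀ x ∈ Icc (0:ℝ) 1, h' (h x) = x) ∧ (∀ y ∈ Icc (0:ℝ) 1, h (h' y) = y)

/- ------------------------------------------------------------------ -/
/- Auxiliary development -/

namespace FracHomeo

/-- helper: produce `lexLe` from an analysis at the least point of difference. -/
lemma lexLe_of_min {σ ω : ℕ → Bool}
    (H : ∀ k, (∀ j < k, σ j = ω j) → σ k ≠ ω k → σ k = false ∧ ω k = true) :
    lexLe σ ω := by
  classical
  by_cases h : σ = ω
  · exact Or.inr h
  · have hex : ∃ n, σ n ≠ ω n := by
      by_contra hc
      push_neg at hc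
      exact h (funext fun n => hc n)
    obtain ⟨hs, ho⟩ := H (Nat.find hex) (fun j hj => not_not.mp (Nat.find_min hex hj))
      (Nat.find_spec hex)
    exact Or.inl ⟨Nat.find hex, fun j hj => not_not.mp (Nat.find_min hex hj),
      by rw [hs, ho]; exact Bool.false_lt_true⟩

lemma lexLt_shift {σ ω : ℕ → Bool} {m : ℕ}
    (hag : ∀ j < m + 1, σ j = ω j) (hlt : σ (m+1) < ω (m+1)) :
    lexLt (shiftn 1 σ) (shiftn 1 ω) :=
  ⟨m, fun j hj => hag (j+1) (by omega), hlt⟩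

/-- Bundled overlapping masked IFS data on `[0,1]`. -/
structure Sys where
  f0 : ℝ → ℝ
  f1 : ℝ → ℝ
  g0 : ℝ → ℝ
  g1 : ℝ → ℝ
  q : ℝ
  hf0m : StrictMonoOn f0 (Icc 0 1)
  hf1m : StrictMonoOn f1 (Icc 0 1)
  hf0c : ContinuousOn f0 (Icc 0 1)
  hf1c : ContinuousOn f1 (Icc 0 1)
  hf0map : MapsTo f0 (Icc 0 1) (Icc 0 1)
  hf1map : MapsTo f1 (Icc 0 1) (Icc 0 1)
  c : ℝ
  hc0 : 0 ≤ c
  hc1 : c < 1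
  hlip0 : ∀ x ∈ Icc (0:ℝ) 1, ∀ y ∈ Icc (0:ℝ) 1, |f0 x - f0 y| ≤ c * |x - y|
  hlip1 : ∀ x ∈ Icc (0:ℝ) 1, ∀ y ∈ Icc (0:ℝ) 1, |f1 x - f1 y| ≤ c * |x - y|
  hf00 : f0 0 = 0
  hf11 : f1 1 = 1
  hf10pos : 0 < f1 0
  hq1 : f1 0 < q
  hq2 : q < f0 1
  hf01lt : f0 1 < 1
  hg0 : ∀ x ∈ Icc (0:ℝ) 1, g0 (f0 x) = x
  hg1 : ∀ x ∈ Icc (0:ℝ) 1, g1 (f1 x) = x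

namespace Sys

variable (S : Sys)

noncomputable def Tp : ℝ → ℝ := Tplus S.g0 S.g1 S.q
noncomputable def Tm : ℝ → ℝ := Tminus S.g0 S.g1 S.q
noncomputable def tp (x : ℝ) : ℕ → Bool := tauPlus S.g0 S.g1 S.q x
noncomputable def tm (x : ℝ) : ℕ → Bool := tauMinus S.g0 S.g1 S.q x
noncomputable def pic (σ : ℕ → Bool) : ℝ := piCode S.f0 S.f1 σ
def fb (d : Bool) : ℝ → ℝ := cond d S.f1 S.f0
noncomputable def word (σ : ℕ → Bool) (k : ℕ) (x : ℝ) : ℝ := wordMap S.f0 S.f1 σ k x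

lemma tp_apply (x : ℝ) (n : ℕ) : S.tp x n = decide (S.q ≤ S.Tp^[n] x) := rfl
lemma tm_apply (x : ℝ) (n : ℕ) : S.tm x n = decide (S.q < S.Tm^[n] x) := rfl

lemma q_pos : 0 < S.q := S.hf10pos.trans S.hq1
lemma q_lt_one : S.q < 1 := S.hq2.trans S.hf01lt
lemma q_mem : S.q ∈ Icc (0:ℝ) 1 := ⟨S.q_pos.le, S.q_lt_one.le⟩

lemma f01_mem : S.f0 1 ∈ Icc (0:ℝ) 1 := S.hf0map (by norm_num)
lemma f10_mem : S.f1 0 ∈ Icc (0:ℝ) 1 := S.hf1map (by norm_num)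

/-- right inverse on the branch image `[0, f0 1]`. -/
lemma inv0 {x : ℝ} (hx : x ∈ Icc 0 (S.f0 1)) :
    S.g0 x ∈ Icc (0:ℝ) 1 ∧ S.f0 (S.g0 x) = x := by
  have hsub : Icc (S.f0 0) (S.f0 1) ⊆ S.f0 '' Icc 0 1 :=
    intermediate_value_Icc zero_le_one S.hf0c
  rw [S.hf00] at hsub
  obtain ⟨t, ht, rfl⟩ := hsub hx
  rw [S.hg0 t ht]
  exact ⟨ht, rfl⟩

lemma inv1 {x : ℝ} (hx : x ∈ Icc (S.f1 0) 1) :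
    S.g1 x ∈ Icc (0:ℝ) 1 ∧ S.f1 (S.g1 x) = x := by
  have hsub : Icc (S.f1 0) (S.f1 1) ⊆ S.f1 '' Icc 0 1 :=
    intermediate_value_Icc zero_le_one S.hf1c
  rw [S.hf11] at hsub
  obtain ⟨t, ht, rfl⟩ := hsub hx
  rw [S.hg1 t ht]
  exact ⟨ht, rfl⟩

lemma dom0_of_lt {x : ℝ} (hx : x ∈ Icc (0:ℝ) 1) (h : x < S.q) : x ∈ Icc 0 (S.f0 1) :=
  ⟨hx.1, (h.trans S.hq2).le⟩

lemma dom0_of_le {x : ℝ} (hx : x ∈ Icc (0:ℝ) 1) (h : x ≤ S.q) : x ∈ Icc 0 (S.f0 1) :=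
  ⟨hx.1, h.trans S.hq2.le⟩

lemma dom1_of_le {x : ℝ} (hx : x ∈ Icc (0:ℝ) 1) (h : S.q ≤ x) : x ∈ Icc (S.f1 0) 1 :=
  ⟨S.hq1.le.trans h, hx.2⟩

lemma dom1_of_lt {x : ℝ} (hx : x ∈ Icc (0:ℝ) 1) (h : S.q < x) : x ∈ Icc (S.f1 0) 1 :=
  ⟨(S.hq1.trans h).le, hx.2⟩

lemma g0_lt_g0 {x y : ℝ} (hx : x ∈ Icc 0 (S.f0 1)) (hy : y ∈ Icc 0 (S.f0 1)) (h : x < y) :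
    S.g0 x < S.g0 y := by
  obtain ⟨hx1, hx2⟩ := S.inv0 hx
  obtain ⟨hy1, hy2⟩ := S.inv0 hy
  by_contra hc
  push_neg at hc
  rcases eq_or_lt_of_le hc with hc | hc
  · rw [← hx2, ← hy2, ← hc] at h; exact lt_irrefl _ h
  · exact absurd (by rw [hx2, hy2]; exact h) (not_lt.mpr (S.hf0m hy1 hx1 hc).le)

lemma g1_lt_g1 {x y : ℝ} (hx : x ∈ Icc (S.f1 0) 1) (hy : y ∈ Icc (S.f1 0) 1) (h : x < y) :
    S.g1 x < S.g1 y := by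
  obtain ⟨hx1, hx2⟩ := S.inv1 hx
  obtain ⟨hy1, hy2⟩ := S.inv1 hy
  by_contra hc
  push_neg at hc
  rcases eq_or_lt_of_le hc with hc | hc
  · rw [← hx2, ← hy2, ← hc] at h; exact lt_irrefl _ h
  · exact absurd (by rw [hx2, hy2]; exact h) (not_lt.mpr (S.hf1m hy1 hx1 hc).le)

lemma g0_le_g0 {x y : ℝ} (hx : x ∈ Icc 0 (S.f0 1)) (hy : y ∈ Icc 0 (S.f0 1)) (h : x ≤ y) :
    S.g0 x ≤ S.g0 y := by
  rcases eq_or_lt_of_le h with rfl | h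
  · exact le_refl _
  · exact (S.g0_lt_g0 hx hy h).le

lemma g1_le_g1 {x y : ℝ} (hx : x ∈ Icc (S.f1 0) 1) (hy : y ∈ Icc (S.f1 0) 1) (h : x ≤ y) :
    S.g1 x ≤ S.g1 y := by
  rcases eq_or_lt_of_le h with rfl | h
  · exact le_refl _
  · exact (S.g1_lt_g1 hx hy h).le

/-- the plus map: branch values and membership. -/
lemma Tp_lt {x : ℝ} (h : x < S.q) : S.Tp x = S.g0 x := if_pos h
lemma Tp_ge {x : ℝ} (h : S.q ≤ x) : S.Tp x = S.g1 x := if_neg (not_lt.mpr h)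
lemma Tm_le {x : ℝ} (h : x ≤ S.q) : S.Tm x = S.g0 x := if_pos h
lemma Tm_gt {x : ℝ} (h : S.q < x) : S.Tm x = S.g1 x := if_neg (not_le.mpr h)

lemma Tp_mem {x : ℝ} (hx : x ∈ Icc (0:ℝ) 1) : S.Tp x ∈ Icc (0:ℝ) 1 := by
  by_cases h : x < S.q
  · rw [S.Tp_lt h]; exact (S.inv0 (S.dom0_of_lt hx h)).1
  · rw [S.Tp_ge (not_lt.mp h)]; exact (S.inv1 (S.dom1_of_le hx (not_lt.mp h))).1

lemma Tm_mem {x : ℝ} (hx : x ∈ Icc (0:ℝ) 1) : S.Tm x ∈ Icc (0:ℝ) 1 := by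
  by_cases h : x ≤ S.q
  · rw [S.Tm_le h]; exact (S.inv0 (S.dom0_of_le hx h)).1
  · rw [S.Tm_gt (not_le.mp h)]; exact (S.inv1 (S.dom1_of_lt hx (not_le.mp h))).1

lemma Tp_iter_mem {x : ℝ} (hx : x ∈ Icc (0:ℝ) 1) (n : ℕ) : S.Tp^[n] x ∈ Icc (0:ℝ) 1 :=
  Set.MapsTo.iterate (fun _ h => S.Tp_mem h) n hx

lemma Tm_iter_mem {x : ℝ} (hx : x ∈ Icc (0:ℝ) 1) (n : ℕ) : S.Tm^[n] x ∈ Icc (0:ℝ) 1 :=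
  Set.MapsTo.iterate (fun _ h => S.Tm_mem h) n hx

lemma fb_Tp {x : ℝ} (hx : x ∈ Icc (0:ℝ) 1) : S.fb (decide (S.q ≤ x)) (S.Tp x) = x := by
  by_cases h : x < S.q
  · rw [decide_eq_false (not_le.mpr h), S.Tp_lt h]
    exact (S.inv0 (S.dom0_of_lt hx h)).2
  · rw [decide_eq_true (not_lt.mp h), S.Tp_ge (not_lt.mp h)]
    exact (S.inv1 (S.dom1_of_le hx (not_lt.mp h))).2

lemma fb_Tm {x : ℝ} (hx : x ∈ Icc (0:ℝ) 1) : S.fb (decide (S.q < x)) (S.Tm x) = x := by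
  by_cases h : x ≤ S.q
  · rw [decide_eq_false (not_lt.mpr h), S.Tm_le h]
    exact (S.inv0 (S.dom0_of_le hx h)).2
  · rw [decide_eq_true (not_le.mp h), S.Tm_gt (not_le.mp h)]
    exact (S.inv1 (S.dom1_of_lt hx (not_le.mp h))).2

lemma fb_mem (d : Bool) {x : ℝ} (hx : x ∈ Icc (0:ℝ) 1) : S.fb d x ∈ Icc (0:ℝ) 1 := by
  cases d
  · exact S.hf0map hx
  · exact S.hf1map hx

lemma fb_lip (d : Bool) {x y : ℝ} (hx : x ∈ Icc (0:ℝ) 1) (hy : y ∈ Icc (0:ℝ) 1) :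
    |S.fb d x - S.fb d y| ≤ S.c * |x - y| := by
  cases d
  · exact S.hlip0 x hx y hy
  · exact S.hlip1 x hx y hy

lemma fb_mono (d : Bool) {x y : ℝ} (hx : x ∈ Icc (0:ℝ) 1) (hy : y ∈ Icc (0:ℝ) 1) (h : x ≤ y) :
    S.fb d x ≤ S.fb d y := by
  cases d
  · exact S.hf0m.monotoneOn hx hy h
  · exact S.hf1m.monotoneOn hx hy h

lemma fb_inj (d : Bool) {x y : ℝ} (hx : x ∈ Icc (0:ℝ) 1) (hy : y ∈ Icc (0:ℝ) 1)
    (h : S.fb d x = S.fb d y) : x = y := by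
  cases d
  · exact S.hf0m.injOn hx hy h
  · exact S.hf1m.injOn hx hy h

lemma word_zero (σ : ℕ → Bool) (x : ℝ) : S.word σ 0 x = S.fb (σ 0) x := rfl
lemma word_succ (σ : ℕ → Bool) (k : ℕ) (x : ℝ) :
    S.word σ (k+1) x = S.word σ k (S.fb (σ (k+1)) x) := rfl

lemma word_mem (σ : ℕ → Bool) (k : ℕ) {x : ℝ} (hx : x ∈ Icc (0:ℝ) 1) :
    S.word σ k x ∈ Icc (0:ℝ) 1 := by
  induction k generalizing x with
  | zero => exact S.fb_mem _ hx
  | succ n ih => exact ih (S.fb_mem _ hx)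

lemma word_lip (σ : ℕ → Bool) (k : ℕ) {x y : ℝ} (hx : x ∈ Icc (0:ℝ) 1)
    (hy : y ∈ Icc (0:ℝ) 1) : |S.word σ k x - S.word σ k y| ≤ S.c ^ (k+1) * |x - y| := by
  induction k generalizing x y with
  | zero => simpa [word_zero] using S.fb_lip (σ 0) hx hy
  | succ n ih =>
    calc |S.word σ (n+1) x - S.word σ (n+1) y|
        = |S.word σ n (S.fb (σ (n+1)) x) - S.word σ n (S.fb (σ (n+1)) y)| := rfl
      _ ≤ S.c ^ (n+1) * |S.fb (σ (n+1)) x - S.fb (σ (n+1)) y| :=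
          ih (S.fb_mem _ hx) (S.fb_mem _ hy)
      _ ≤ S.c ^ (n+1) * (S.c * |x - y|) := by
          exact mul_le_mul_of_nonneg_left (S.fb_lip _ hx hy) (pow_nonneg S.hc0 _)
      _ = S.c ^ (n+2) * |x - y| := by ring

/-- the word sequence converges to the coding point. -/
lemma pic_tendsto (σ : ℕ → Bool) :
    Tendsto (fun k => S.word σ k 0) atTop (𝓝 (S.pic σ)) := by
  have hmem0 : (0:ℝ) ∈ Icc (0:ℝ) 1 := by norm_num
  have hcau : CauchySeq (fun k => S.word σ k 0) := by
    apply cauchySeq_of_le_geometric S.c 1 S.hc1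
    intro n
    have h1 : S.word σ (n+1) 0 = S.word σ n (S.fb (σ (n+1)) 0) := rfl
    rw [Real.dist_eq, h1]
    have := S.word_lip σ n hmem0 (S.fb_mem (σ (n+1)) hmem0)
    have hb : |(0:ℝ) - S.fb (σ (n+1)) 0| ≤ 1 := by
      have := S.fb_mem (σ (n+1)) hmem0
      rw [abs_sub_comm, sub_zero, abs_of_nonneg this.1]
      exact this.2
    calc |S.word σ n 0 - S.word σ n (S.fb (σ (n+1)) 0)|
        ≤ S.c ^ (n+1) * |0 - S.fb (σ (n+1)) 0| := this
      _ ≤ S.c ^ (n+1) * 1 := mul_le_mul_of_nonneg_left hb (pow_nonneg S.hc0 _)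
      _ = 1 * S.c ^ n * S.c := by ring
      _ ≤ 1 * S.c ^ n := by
          have : (0:ℝ) ≤ S.c ^ n := pow_nonneg S.hc0 _
          nlinarith [S.hc1.le]
  obtain ⟨L, hL⟩ := cauchySeq_tendsto_of_complete hcau
  have : S.pic σ = L := hL.limUnder_eq
  rw [this]; exact hL

lemma pic_mem (σ : ℕ → Bool) : S.pic σ ∈ Icc (0:ℝ) 1 :=
  isClosed_Icc.mem_of_tendsto (S.pic_tendsto σ)
    (Filter.Eventually.of_forall fun k => S.word_mem σ k (by norm_num))

lemma cpow_tendsto : Tendsto (fun k : ℕ => S.c ^ (k+1)) atTop (𝓝 0) := by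
  have := tendsto_pow_atTop_nhds_zero_of_lt_one S.hc0 S.hc1
  exact this.comp (tendsto_add_atTop_nat 1)

/-- if `x = word σ k (z k)` with `z k ∈ [0,1]`, then `pic σ = x`. -/
lemma pic_eq_of_word (σ : ℕ → Bool) (x : ℝ) (z : ℕ → ℝ) (hz : ∀ k, z k ∈ Icc (0:ℝ) 1)
    (hw : ∀ k, S.word σ k (z k) = x) : S.pic σ = x := by
  have hmem0 : (0:ℝ) ∈ Icc (0:ℝ) 1 := by norm_num
  refine tendsto_nhds_unique (S.pic_tendsto σ) ?_
  rw [← tendsto_sub_nhds_zero_iff]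
  apply squeeze_zero_norm _ S.cpow_tendsto
  intro k
  have := S.word_lip σ k hmem0 (hz k)
  rw [hw k] at this
  calc ‖S.word σ k 0 - x‖ = |S.word σ k 0 - x| := rfl
    _ ≤ S.c ^ (k+1) * |0 - z k| := this
    _ ≤ S.c ^ (k+1) * 1 := by
        apply mul_le_mul_of_nonneg_left _ (pow_nonneg S.hc0 _)
        rw [abs_sub_comm, sub_zero, abs_of_nonneg (hz k).1]
        exact (hz k).2
    _ = S.c ^ (k+1) := mul_one _

lemma word_tp {x : ℝ} (hx : x ∈ Icc (0:ℝ) 1) (k : ℕ) :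
    S.word (S.tp x) k (S.Tp^[k+1] x) = x := by
  induction k with
  | zero =>
    rw [word_zero, tp_apply]
    exact S.fb_Tp hx
  | succ n ih =>
    rw [word_succ, tp_apply]
    have hmem := S.Tp_iter_mem hx (n+1)
    have h1 : S.Tp^[n+1+1] x = S.Tp (S.Tp^[n+1] x) := Function.iterate_succ_apply' _ _ _
    rw [h1, S.fb_Tp hmem]
    exact ih

lemma word_tm {x : ℝ} (hx : x ∈ Icc (0:ℝ) 1) (k : ℕ) :
    S.word (S.tm x) k (S.Tm^[k+1] x) = x := by
  induction k with
  | zero =>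
    rw [word_zero, tm_apply]
    exact S.fb_Tm hx
  | succ n ih =>
    rw [word_succ, tm_apply]
    have hmem := S.Tm_iter_mem hx (n+1)
    have h1 : S.Tm^[n+1+1] x = S.Tm (S.Tm^[n+1] x) := Function.iterate_succ_apply' _ _ _
    rw [h1, S.fb_Tm hmem]
    exact ih

lemma pic_tp {x : ℝ} (hx : x ∈ Icc (0:ℝ) 1) : S.pic (S.tp x) = x :=
  S.pic_eq_of_word _ x (fun k => S.Tp^[k+1] x) (fun k => S.Tp_iter_mem hx (k+1))
    (S.word_tp hx)

lemma pic_tm {x : ℝ} (hx : x ∈ Icc (0:ℝ) 1) : S.pic (S.tm x) = x :=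
  S.pic_eq_of_word _ x (fun k => S.Tm^[k+1] x) (fun k => S.Tm_iter_mem hx (k+1))
    (S.word_tm hx)

lemma word_cons (σ : ℕ → Bool) (k : ℕ) (x : ℝ) :
    S.word σ (k+1) x = S.fb (σ 0) (S.word (shiftn 1 σ) k x) := by
  induction k generalizing x with
  | zero => rfl
  | succ n ih =>
    have h1 : S.word σ (n+1+1) x = S.word σ (n+1) (S.fb (σ (n+2)) x) := rfl
    rw [h1, ih]
    rfl

/-- peel off the first symbol of the coding map. -/
lemma pic_cons (σ : ℕ → Bool) : S.pic σ = S.fb (σ 0) (S.pic (shiftn 1 σ)) := by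
  have h2 := S.pic_tendsto (shiftn 1 σ)
  have hmem : S.pic (shiftn 1 σ) ∈ Icc (0:ℝ) 1 := S.pic_mem _
  have hcw : ContinuousWithinAt (S.fb (σ 0)) (Icc 0 1) (S.pic (shiftn 1 σ)) := by
    cases hσ : σ 0
    · exact S.hf0c.continuousWithinAt hmem
    · exact S.hf1c.continuousWithinAt hmem
  have h3 : Tendsto (fun k => S.word (shiftn 1 σ) k 0) atTop
      (𝓝[Icc (0:ℝ) 1] (S.pic (shiftn 1 σ))) := by
    rw [tendsto_nhdsWithin_iff]
    exact ⟨h2, Filter.Eventually.of_forall fun k => S.word_mem _ k (by norm_num)⟩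
  have h4 : Tendsto (fun k => S.fb (σ 0) (S.word (shiftn 1 σ) k 0)) atTop
      (𝓝 (S.fb (σ 0) (S.pic (shiftn 1 σ)))) := hcw.tendsto.comp h3
  have h5 : (fun k => S.fb (σ 0) (S.word (shiftn 1 σ) k 0)) =
      fun k => S.word σ (k+1) 0 := by
    funext k; exact (S.word_cons σ k 0).symm
  rw [h5] at h4
  have h6 : Tendsto (fun k => S.word σ (k+1) 0) atTop (𝓝 (S.pic σ)) :=
    (S.pic_tendsto σ).comp (tendsto_add_atTop_nat 1)
  exact tendsto_nhds_unique h6 h4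

lemma tp_shift (x : ℝ) : shiftn 1 (S.tp x) = S.tp (S.Tp x) := by
  funext n
  show S.tp x (n+1) = _
  rw [tp_apply, tp_apply, Function.iterate_succ_apply]

lemma tm_shift (x : ℝ) : shiftn 1 (S.tm x) = S.tm (S.Tm x) := by
  funext n
  show S.tm x (n+1) = _
  rw [tm_apply, tm_apply, Function.iterate_succ_apply]

/-- the plus itinerary is weakly lex monotone. -/
lemma tp_mono {x y : ℝ} (hx : x ∈ Icc (0:ℝ) 1) (hy : y ∈ Icc (0:ℝ) 1) (hxy : x ≤ y) :
    lexLe (S.tp x) (S.tp y) := by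
  apply lexLe_of_min
  intro k hag hne
  have horb : ∀ j, (∀ i < j, S.tp x i = S.tp y i) → S.Tp^[j] x ≤ S.Tp^[j] y := by
    intro j
    induction j with
    | zero => intro _; simpa using hxy
    | succ n ih =>
      intro hagn
      have hle : S.Tp^[n] x ≤ S.Tp^[n] y := ih fun i hi => hagn i (hi.trans (Nat.lt_succ_self n))
      have hd : decide (S.q ≤ S.Tp^[n] x) = decide (S.q ≤ S.Tp^[n] y) := hagn n (Nat.lt_succ_self n)
      have hmx := S.Tp_iter_mem hx n
      have hmy := S.Tp_iter_mem hy n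
      rw [Function.iterate_succ_apply', Function.iterate_succ_apply']
      by_cases hc : S.q ≤ S.Tp^[n] x
      · have hc' : S.q ≤ S.Tp^[n] y := hc.trans hle
        rw [S.Tp_ge hc, S.Tp_ge hc']
        exact S.g1_le_g1 (S.dom1_of_le hmx hc) (S.dom1_of_le hmy hc') hle
      · have hc2 : ¬ S.q ≤ S.Tp^[n] y := by
          intro h
          rw [decide_eq_false hc, decide_eq_true h] at hd
          exact Bool.false_ne_true hd
        rw [S.Tp_lt (not_le.mp hc), S.Tp_lt (not_le.mp hc2)]
        exact S.g0_le_g0 (S.dom0_of_lt hmx (not_le.mp hc)) (S.dom0_of_lt hmy (not_le.mp hc2)) hle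
  have hle := horb k hag
  rw [tp_apply, tp_apply] at hne ⊢
  by_cases hc : S.q ≤ S.Tp^[k] x
  · exact absurd (by rw [decide_eq_true hc, decide_eq_true (hc.trans hle)]) hne
  · constructor
    · exact decide_eq_false hc
    · by_cases hc2 : S.q ≤ S.Tp^[k] y
      · exact decide_eq_true hc2
      · exact absurd (by rw [decide_eq_false hc, decide_eq_false hc2]) hne

/-- mixed monotonicity: plus itinerary of a smaller point is lex below the minus
itinerary of a bigger point. -/
lemma tp_lt_tm {x y : ℝ} (hx : x ∈ Icc (0:ℝ) 1) (hy : y ∈ Icc (0:ℝ) 1) (hxy : x < y) :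
    lexLe (S.tp x) (S.tm y) := by
  apply lexLe_of_min
  intro k hag hne
  have horb : ∀ j, (∀ i < j, S.tp x i = S.tm y i) → S.Tp^[j] x < S.Tm^[j] y := by
    intro j
    induction j with
    | zero => intro _; simpa using hxy
    | succ n ih =>
      intro hagn
      have hlt : S.Tp^[n] x < S.Tm^[n] y := ih fun i hi => hagn i (hi.trans (Nat.lt_succ_self n))
      have hd : decide (S.q ≤ S.Tp^[n] x) = decide (S.q < S.Tm^[n] y) := hagn n (Nat.lt_succ_self n)
      have hmx := S.Tp_iter_mem hx n
      have hmy := S.Tm_iter_mem hy n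
      rw [Function.iterate_succ_apply', Function.iterate_succ_apply']
      by_cases hc : S.q ≤ S.Tp^[n] x
      · have hc' : S.q < S.Tm^[n] y := hc.trans_lt hlt
        rw [S.Tp_ge hc, S.Tm_gt hc']
        exact S.g1_lt_g1 (S.dom1_of_le hmx hc) (S.dom1_of_lt hmy hc') hlt
      · have hc2 : ¬ S.q < S.Tm^[n] y := by
          intro h
          rw [decide_eq_false hc, decide_eq_true h] at hd
          exact Bool.false_ne_true hd
        rw [S.Tp_lt (not_le.mp hc), S.Tm_le (not_lt.mp hc2)]
        exact S.g0_lt_g0 (S.dom0_of_lt hmx (not_le.mp hc)) (S.dom0_of_le hmy (not_lt.mp hc2)) hlt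
  have hlt := horb k hag
  rw [tp_apply, tm_apply] at hne ⊢
  by_cases hc : S.q ≤ S.Tp^[k] x
  · exact absurd (by rw [decide_eq_true hc, decide_eq_true (hc.trans_lt hlt)]) hne
  · constructor
    · exact decide_eq_false hc
    · by_cases hc2 : S.q < S.Tm^[k] y
      · exact decide_eq_true hc2
      · exact absurd (by rw [decide_eq_false hc, decide_eq_false hc2]) hne

end Sys

section Two

open Sys

variable (F G : Sys)

/-- peel one symbol of the transformation. -/
lemma pic_tp_cons (y : ℝ) :
    G.pic (F.tp y) = G.fb (decide (F.q ≤ y)) (G.pic (F.tp (F.Tp y))) := by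
  rw [G.pic_cons (F.tp y), F.tp_shift]
  congr 1

lemma step_lift {n : ℕ} {x y : ℝ} (hx : x ∈ Icc (0:ℝ) 1) (hy : y ∈ Icc (0:ℝ) 1)
    (hd : decide (G.q ≤ x) = decide (F.q ≤ y))
    (hrec : G.Tp x ≤ G.pic (F.tp (F.Tp y)) + 2 * G.c ^ n) :
    x ≤ G.pic (F.tp y) + 2 * G.c ^ (n+1) := by
  set P := G.pic (F.tp (F.Tp y)) with hP
  have hPm : P ∈ Icc (0:ℝ) 1 := G.pic_mem _
  have hum : G.Tp x ∈ Icc (0:ℝ) 1 := G.Tp_mem hx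
  have hxeq : G.fb (decide (G.q ≤ x)) (G.Tp x) = x := G.fb_Tp hx
  have hpic : G.pic (F.tp y) = G.fb (decide (G.q ≤ x)) P := by
    rw [pic_tp_cons F G y, ← hd]
  have hpos : (0:ℝ) ≤ 2 * G.c ^ (n+1) := by
    have := pow_nonneg G.hc0 (n+1); linarith
  rcases le_or_gt (G.Tp x) P with hle | hlt
  · have hm := G.fb_mono (decide (G.q ≤ x)) hum hPm hle
    rw [hxeq, ← hpic] at hm
    linarith
  · have hl := G.fb_lip (decide (G.q ≤ x)) hum hPm
    have habs : |G.Tp x - P| = G.Tp x - P := abs_of_pos (sub_pos.mpr hlt)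
    rw [habs] at hl
    have h3 : G.fb (decide (G.q ≤ x)) (G.Tp x) - G.fb (decide (G.q ≤ x)) P ≤
        G.c * (G.Tp x - P) := (le_abs_self _).trans hl
    have h4 : G.c * (G.Tp x - P) ≤ G.c * (2 * G.c ^ n) :=
      mul_le_mul_of_nonneg_left (by linarith) G.hc0
    rw [hxeq] at h3
    rw [hpic]
    have : G.c * (2 * G.c ^ n) = 2 * G.c ^ (n+1) := by ring
    linarith

lemma step_lift_m {n : ℕ} {x y : ℝ} (hx : x ∈ Icc (0:ℝ) 1) (hy : y ∈ Icc (0:ℝ) 1)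
    (hd : decide (G.q < x) = decide (F.q ≤ y))
    (hrec : G.pic (F.tp (F.Tp y)) ≤ G.Tm x + 2 * G.c ^ n) :
    G.pic (F.tp y) ≤ x + 2 * G.c ^ (n+1) := by
  set P := G.pic (F.tp (F.Tp y)) with hP
  have hPm : P ∈ Icc (0:ℝ) 1 := G.pic_mem _
  have hum : G.Tm x ∈ Icc (0:ℝ) 1 := G.Tm_mem hx
  have hxeq : G.fb (decide (G.q < x)) (G.Tm x) = x := G.fb_Tm hx
  have hpic : G.pic (F.tp y) = G.fb (decide (G.q < x)) P := by
    rw [pic_tp_cons F G y, ← hd]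
  have hpos : (0:ℝ) ≤ 2 * G.c ^ (n+1) := by
    have := pow_nonneg G.hc0 (n+1); linarith
  rcases le_or_gt P (G.Tm x) with hle | hlt
  · have hm := G.fb_mono (decide (G.q < x)) hPm hum hle
    rw [hxeq] at hm
    rw [hpic]
    linarith
  · have hl := G.fb_lip (decide (G.q < x)) hPm hum
    have habs : |P - G.Tm x| = P - G.Tm x := abs_of_pos (sub_pos.mpr hlt)
    rw [habs] at hl
    have h3 : G.fb (decide (G.q < x)) P - G.fb (decide (G.q < x)) (G.Tm x) ≤
        G.c * (P - G.Tm x) := (le_abs_self _).trans hl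
    have h4 : G.c * (P - G.Tm x) ≤ G.c * (2 * G.c ^ n) :=
      mul_le_mul_of_nonneg_left (by linarith) G.hc0
    rw [hxeq] at h3
    rw [hpic]
    have : G.c * (2 * G.c ^ n) = 2 * G.c ^ (n+1) := by ring
    linarith

lemma lemA_aux (hbeta : F.tp F.q = G.tp G.q) :
    ∀ n : ℕ, ∀ x ∈ Icc (0:ℝ) 1, ∀ y ∈ Icc (0:ℝ) 1,
      lexLe (G.tp x) (F.tp y) → x ≤ G.pic (F.tp y) + 2 * G.c ^ n := by
  intro n
  induction n with
  | zero =>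
    intro x hx y hy _
    have h1 := (G.pic_mem (F.tp y)).1
    have h2 := hx.2
    simp only [pow_zero]
    linarith
  | succ n ih =>
    intro x hx y hy hrel
    have hpos : (0:ℝ) ≤ 2 * G.c ^ (n+1) := by nlinarith [pow_nonneg G.hc0 (n+1)]
    rcases hrel with hlt | heq
    · obtain ⟨k, hag, hlt⟩ := hlt
      obtain ⟨hxk, hyk⟩ := Bool.lt_iff.mp hlt
      cases k with
      | zero =>
        have hx0 : ¬ G.q ≤ x := by
          rw [G.tp_apply] at hxk
          exact of_decide_eq_false hxk
        have hy0 : F.q ≤ y := by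
          rw [F.tp_apply] at hyk
          exact of_decide_eq_true hyk
        have hb : lexLe (G.tp G.q) (F.tp y) := by
          rw [← hbeta]; exact F.tp_mono F.q_mem hy hy0
        have key : G.q ≤ G.pic (F.tp y) + 2 * G.c ^ (n+1) := by
          rcases hb with hblt | hbeq
          · obtain ⟨k', hag', hlt'⟩ := hblt
            cases k' with
            | zero =>
              exfalso
              have := (Bool.lt_iff.mp hlt').1
              rw [G.tp_apply] at this
              simp at this
            | succ m =>
              have hsh : lexLt (shiftn 1 (G.tp G.q)) (shiftn 1 (F.tp y)) :=
                lexLt_shift hag' hlt'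
              rw [G.tp_shift, F.tp_shift] at hsh
              have hrec := ih (G.Tp G.q) (G.Tp_mem G.q_mem) (F.Tp y) (F.Tp_mem hy)
                (Or.inl hsh)
              exact step_lift F G G.q_mem hy (by simp [hy0]) hrec
          · rw [← hbeq, G.pic_tp G.q_mem]
            linarith
        have hxq : x ≤ G.q := (not_le.mp hx0).le
        linarith
      | succ m =>
        have hd : G.tp x 0 = F.tp y 0 := hag 0 (Nat.succ_pos m)
        have hsh : lexLt (shiftn 1 (G.tp x)) (shiftn 1 (F.tp y)) := lexLt_shift hag hlt
        rw [G.tp_shift, F.tp_shift] at hsh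
        have hrec := ih (G.Tp x) (G.Tp_mem hx) (F.Tp y) (F.Tp_mem hy) (Or.inl hsh)
        refine step_lift F G hx hy ?_ hrec
        rw [G.tp_apply, F.tp_apply] at hd
        exact hd
    · rw [← heq, G.pic_tp hx]
      linarith

lemma lemA (hbeta : F.tp F.q = G.tp G.q) {x y : ℝ} (hx : x ∈ Icc (0:ℝ) 1)
    (hy : y ∈ Icc (0:ℝ) 1) (hrel : lexLe (G.tp x) (F.tp y)) :
    x ≤ G.pic (F.tp y) := by
  have key : ∀ n, x ≤ G.pic (F.tp y) + 2 * G.c ^ n :=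
    fun n => lemA_aux F G hbeta n x hx y hy hrel
  have ht : Tendsto (fun n : ℕ => G.pic (F.tp y) + 2 * G.c ^ n) atTop
      (𝓝 (G.pic (F.tp y))) := by
    have h1 := tendsto_pow_atTop_nhds_zero_of_lt_one G.hc0 G.hc1
    have h2 : Tendsto (fun n : ℕ => G.pic (F.tp y) + 2 * G.c ^ n) atTop
        (𝓝 (G.pic (F.tp y) + 2 * 0)) := tendsto_const_nhds.add (h1.const_mul 2)
    simpa using h2
  exact ge_of_tendsto' ht key

lemma lemB_aux (halpha : F.tm F.q = G.tm G.q) :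
    ∀ n : ℕ, ∀ x ∈ Icc (0:ℝ) 1, ∀ y ∈ Icc (0:ℝ) 1,
      lexLe (F.tp y) (G.tm x) → G.pic (F.tp y) ≤ x + 2 * G.c ^ n := by
  intro n
  induction n with
  | zero =>
    intro x hx y hy _
    have h1 := (G.pic_mem (F.tp y)).2
    have h2 := hx.1
    simp only [pow_zero]
    linarith
  | succ n ih =>
    intro x hx y hy hrel
    have hpos : (0:ℝ) ≤ 2 * G.c ^ (n+1) := by nlinarith [pow_nonneg G.hc0 (n+1)]
    rcases hrel with hlt | heq
    · obtain ⟨k, hag, hlt⟩ := hlt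
      obtain ⟨hyk, hxk⟩ := Bool.lt_iff.mp hlt
      cases k with
      | zero =>
        have hy0 : ¬ F.q ≤ y := by
          rw [F.tp_apply] at hyk
          exact of_decide_eq_false hyk
        have hx0 : G.q < x := by
          rw [G.tm_apply] at hxk
          exact of_decide_eq_true hxk
        have hb : lexLe (F.tp y) (G.tm G.q) := by
          rw [← halpha]; exact F.tp_lt_tm hy F.q_mem (not_le.mp hy0)
        have key : G.pic (F.tp y) ≤ G.q + 2 * G.c ^ (n+1) := by
          rcases hb with hblt | hbeq
          · obtain ⟨k', hag', hlt'⟩ := hblt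
            cases k' with
            | zero =>
              exfalso
              have := (Bool.lt_iff.mp hlt').2
              rw [G.tm_apply] at this
              simp at this
            | succ m =>
              have hsh : lexLt (shiftn 1 (F.tp y)) (shiftn 1 (G.tm G.q)) :=
                lexLt_shift hag' hlt'
              rw [G.tm_shift, F.tp_shift] at hsh
              have hrec := ih (G.Tm G.q) (G.Tm_mem G.q_mem) (F.Tp y) (F.Tp_mem hy)
                (Or.inl hsh)
              refine step_lift_m F G G.q_mem hy ?_ hrec
              simp [hy0]
          · rw [hbeq, G.pic_tm G.q_mem]
            linarith
        linarith
      | succ m =>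
        have hd : F.tp y 0 = G.tm x 0 := hag 0 (Nat.succ_pos m)
        have hsh : lexLt (shiftn 1 (F.tp y)) (shiftn 1 (G.tm x)) := lexLt_shift hag hlt
        rw [G.tm_shift, F.tp_shift] at hsh
        have hrec := ih (G.Tm x) (G.Tm_mem hx) (F.Tp y) (F.Tp_mem hy) (Or.inl hsh)
        refine step_lift_m F G hx hy ?_ hrec
        rw [G.tm_apply, F.tp_apply] at hd
        exact hd.symm
    · rw [heq, G.pic_tm hx]
      linarith

lemma lemB (halpha : F.tm F.q = G.tm G.q) {x y : ℝ} (hx : x ∈ Icc (0:ℝ) 1)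
    (hy : y ∈ Icc (0:ℝ) 1) (hrel : lexLe (F.tp y) (G.tm x)) :
    G.pic (F.tp y) ≤ x := by
  have key : ∀ n, G.pic (F.tp y) ≤ x + 2 * G.c ^ n :=
    fun n => lemB_aux F G halpha n x hx y hy hrel
  have ht : Tendsto (fun n : ℕ => x + 2 * G.c ^ n) atTop (𝓝 x) := by
    have h1 := tendsto_pow_atTop_nhds_zero_of_lt_one G.hc0 G.hc1
    have h2 : Tendsto (fun n : ℕ => x + 2 * G.c ^ n) atTop
        (𝓝 (x + 2 * 0)) := tendsto_const_nhds.add (h1.const_mul 2)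
    simpa using h2
  exact ge_of_tendsto ht (Filter.Eventually.of_forall key)

lemma strict_step (halpha : F.tm F.q = G.tm G.q) (n : ℕ) {y : ℝ} (hy : y ∈ Icc (0:ℝ) 1)
    (hlt : F.Tp^[n] y < F.Tm^[n] F.q)
    (hpic : G.pic (F.tp (F.Tp^[n] y)) = G.Tm^[n] G.q) :
    decide (F.q ≤ F.Tp^[n] y) = decide (F.q < F.Tm^[n] F.q) ∧
      F.Tp^[n+1] y < F.Tm^[n+1] F.q ∧
      G.pic (F.tp (F.Tp^[n+1] y)) = G.Tm^[n+1] G.q := by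
  set a := F.Tp^[n] y with ha
  set b := F.Tm^[n] F.q with hb
  set p' := G.Tm^[n] G.q with hp'
  have ham : a ∈ Icc (0:ℝ) 1 := F.Tp_iter_mem hy n
  have hbm : b ∈ Icc (0:ℝ) 1 := F.Tm_iter_mem F.q_mem n
  have hpm : p' ∈ Icc (0:ℝ) 1 := G.Tm_iter_mem G.q_mem n
  have hdig : decide (F.q < b) = decide (G.q < p') := congrFun halpha n
  have hstep1 : F.Tp^[n+1] y = F.Tp a := Function.iterate_succ_apply' _ _ _
  have hstep2 : F.Tm^[n+1] F.q = F.Tm b := Function.iterate_succ_apply' _ _ _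
  have hstep3 : G.Tm^[n+1] G.q = G.Tm p' := Function.iterate_succ_apply' _ _ _
  set P := G.pic (F.tp (F.Tp a)) with hPdef
  have hPm : P ∈ Icc (0:ℝ) 1 := G.pic_mem _
  have hcons : G.fb (decide (F.q ≤ a)) P = p' := by
    rw [← pic_tp_cons F G a]; exact hpic
  by_cases hc : F.q < b
  · have hgp : G.q < p' := by
      rw [decide_eq_true hc] at hdig
      exact of_decide_eq_true hdig.symm
    have haq : F.q ≤ a := by
      by_contra hna
      push_neg at hna
      have hrel : lexLe (F.tp a) (G.tm G.q) := by
        rw [← halpha]; exact F.tp_lt_tm ham F.q_mem hna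
      have hB := lemB F G halpha G.q_mem ham hrel
      rw [hpic] at hB
      exact absurd hB (not_le.mpr hgp)
    refine ⟨by rw [decide_eq_true haq, decide_eq_true hc], ?_, ?_⟩
    · rw [hstep1, hstep2, F.Tp_ge haq, F.Tm_gt hc]
      exact F.g1_lt_g1 (F.dom1_of_le ham haq) (F.dom1_of_lt hbm hc) hlt
    · rw [hstep1, hstep3]
      rw [decide_eq_true haq] at hcons
      have h5 : G.Tm p' = G.g1 p' := G.Tm_gt hgp
      have h6 := G.inv1 (G.dom1_of_lt hpm hgp)
      have heq2 : G.fb true P = G.fb true (G.g1 p') := by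
        rw [hcons]; exact h6.2.symm
      have h7 := G.fb_inj true hPm h6.1 heq2
      rw [h5]; exact h7
  · push_neg at hc
    have hgp : p' ≤ G.q := by
      rw [decide_eq_false (not_lt.mpr hc)] at hdig
      exact not_lt.mp (of_decide_eq_false hdig.symm)
    have haq : a < F.q := lt_of_lt_of_le hlt hc
    refine ⟨by rw [decide_eq_false (not_le.mpr haq), decide_eq_false (not_lt.mpr hc)], ?_, ?_⟩
    · rw [hstep1, hstep2, F.Tp_lt haq, F.Tm_le hc]
      exact F.g0_lt_g0 (F.dom0_of_lt ham haq) (F.dom0_of_le hbm hc) hlt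
    · rw [hstep1, hstep3]
      rw [decide_eq_false (not_le.mpr haq)] at hcons
      have h5 : G.Tm p' = G.g0 p' := G.Tm_le hgp
      have h6 := G.inv0 (G.dom0_of_le hpm hgp)
      have heq2 : G.fb false P = G.fb false (G.g0 p') := by
        rw [hcons]; exact h6.2.symm
      have h7 := G.fb_inj false hPm h6.1 heq2
      rw [h5]; exact h7

/-- strictness below the mask point. -/
lemma strictS (halpha : F.tm F.q = G.tm G.q) {y : ℝ} (hy : y ∈ Icc (0:ℝ) 1)
    (hyq : y < F.q) : G.pic (F.tp y) < G.q := by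
  have hle : G.pic (F.tp y) ≤ G.q := lemB F G halpha G.q_mem hy
    (by rw [← halpha]; exact F.tp_lt_tm hy F.q_mem hyq)
  rcases lt_or_eq_of_le hle with h | h
  · exact h
  · exfalso
    have main : ∀ n, F.Tp^[n] y < F.Tm^[n] F.q ∧
        G.pic (F.tp (F.Tp^[n] y)) = G.Tm^[n] G.q := by
      intro n
      induction n with
      | zero => exact ⟨by simpa using hyq, by simpa using h⟩
      | succ m ih =>
        exact ⟨(strict_step F G halpha m hy ih.1 ih.2).2.1,
          (strict_step F G halpha m hy ih.1 ih.2).2.2⟩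
    have hdig : F.tp y = F.tm F.q := by
      funext n
      exact (strict_step F G halpha n hy (main n).1 (main n).2).1
    have hye : y = F.q := by
      have h1 := F.pic_tp hy
      rw [hdig, F.pic_tm F.q_mem] at h1
      exact h1.symm
    rw [hye] at hyq
    exact lt_irrefl _ hyq

lemma strict_step' (hbeta : F.tp F.q = G.tp G.q) (n : ℕ) {y : ℝ} (hy : y ∈ Icc (0:ℝ) 1)
    (hlt : F.Tp^[n] F.q < F.Tp^[n] y)
    (hpic : G.pic (F.tp (F.Tp^[n] y)) = G.Tp^[n] G.q) :
    decide (F.q ≤ F.Tp^[n] y) = decide (F.q ≤ F.Tp^[n] F.q) ∧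
      F.Tp^[n+1] F.q < F.Tp^[n+1] y ∧
      G.pic (F.tp (F.Tp^[n+1] y)) = G.Tp^[n+1] G.q := by
  set a := F.Tp^[n] y with ha
  set b := F.Tp^[n] F.q with hb
  set p' := G.Tp^[n] G.q with hp'
  have ham : a ∈ Icc (0:ℝ) 1 := F.Tp_iter_mem hy n
  have hbm : b ∈ Icc (0:ℝ) 1 := F.Tp_iter_mem F.q_mem n
  have hpm : p' ∈ Icc (0:ℝ) 1 := G.Tp_iter_mem G.q_mem n
  have hdig : decide (F.q ≤ b) = decide (G.q ≤ p') := congrFun hbeta n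
  have hstep1 : F.Tp^[n+1] y = F.Tp a := Function.iterate_succ_apply' _ _ _
  have hstep2 : F.Tp^[n+1] F.q = F.Tp b := Function.iterate_succ_apply' _ _ _
  have hstep3 : G.Tp^[n+1] G.q = G.Tp p' := Function.iterate_succ_apply' _ _ _
  set P := G.pic (F.tp (F.Tp a)) with hPdef
  have hPm : P ∈ Icc (0:ℝ) 1 := G.pic_mem _
  have hcons : G.fb (decide (F.q ≤ a)) P = p' := by
    rw [← pic_tp_cons F G a]; exact hpic
  by_cases hc : F.q ≤ b
  · have hgp : G.q ≤ p' := by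
      rw [decide_eq_true hc] at hdig
      exact of_decide_eq_true hdig.symm
    have haq : F.q ≤ a := hc.trans hlt.le
    refine ⟨by rw [decide_eq_true haq, decide_eq_true hc], ?_, ?_⟩
    · rw [hstep1, hstep2, F.Tp_ge haq, F.Tp_ge hc]
      exact F.g1_lt_g1 (F.dom1_of_le hbm hc) (F.dom1_of_le ham haq) hlt
    · rw [hstep1, hstep3]
      rw [decide_eq_true haq] at hcons
      have h5 : G.Tp p' = G.g1 p' := G.Tp_ge hgp
      have h6 := G.inv1 (G.dom1_of_le hpm hgp)
      have heq2 : G.fb true P = G.fb true (G.g1 p') := by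
        rw [hcons]; exact h6.2.symm
      have h7 := G.fb_inj true hPm h6.1 heq2
      rw [h5]; exact h7
  · push_neg at hc
    have hgp : p' < G.q := by
      rw [decide_eq_false (not_le.mpr hc)] at hdig
      exact not_le.mp (of_decide_eq_false hdig.symm)
    have haq : a < F.q := by
      by_contra hna
      push_neg at hna
      have hrel : lexLe (G.tp G.q) (F.tp a) := by
        rw [← hbeta]; exact F.tp_mono F.q_mem ham hna
      have hA := lemA F G hbeta G.q_mem ham hrel
      rw [hpic] at hA
      exact absurd hA (not_le.mpr hgp)
    refine ⟨by rw [decide_eq_false (not_le.mpr haq), decide_eq_false (not_le.mpr hc)], ?_, ?_⟩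
    · rw [hstep1, hstep2, F.Tp_lt haq, F.Tp_lt hc]
      exact F.g0_lt_g0 (F.dom0_of_lt hbm hc) (F.dom0_of_lt ham haq) hlt
    · rw [hstep1, hstep3]
      rw [decide_eq_false (not_le.mpr haq)] at hcons
      have h5 : G.Tp p' = G.g0 p' := G.Tp_lt hgp
      have h6 := G.inv0 (G.dom0_of_lt hpm hgp)
      have heq2 : G.fb false P = G.fb false (G.g0 p') := by
        rw [hcons]; exact h6.2.symm
      have h7 := G.fb_inj false hPm h6.1 heq2
      rw [h5]; exact h7

/-- strictness above the mask point. -/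
lemma strictS' (hbeta : F.tp F.q = G.tp G.q) {y : ℝ} (hy : y ∈ Icc (0:ℝ) 1)
    (hyq : F.q < y) : G.q < G.pic (F.tp y) := by
  have hge : G.q ≤ G.pic (F.tp y) := lemA F G hbeta G.q_mem hy
    (by rw [← hbeta]; exact F.tp_mono F.q_mem hy hyq.le)
  rcases lt_or_eq_of_le hge with h | h
  · exact h
  · exfalso
    have main : ∀ n, F.Tp^[n] F.q < F.Tp^[n] y ∧
        G.pic (F.tp (F.Tp^[n] y)) = G.Tp^[n] G.q := by
      intro n
      induction n with
      | zero => exact ⟨by simpa using hyq, by simpa using h.symm⟩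
      | succ m ih =>
        exact ⟨(strict_step' F G hbeta m hy ih.1 ih.2).2.1,
          (strict_step' F G hbeta m hy ih.1 ih.2).2.2⟩
    have hdig : F.tp y = F.tp F.q := by
      funext n
      exact (strict_step' F G hbeta n hy (main n).1 (main n).2).1
    have hye : y = F.q := by
      have h1 := F.pic_tp hy
      rw [hdig, F.pic_tp F.q_mem] at h1
      exact h1.symm
    rw [hye] at hyq
    exact lt_irrefl _ hyq

lemma iter_comm (halpha : F.tm F.q = G.tm G.q) (hbeta : F.tp F.q = G.tp G.q)
    {y : ℝ} (hy : y ∈ Icc (0:ℝ) 1) :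
    ∀ n, G.Tp^[n] (G.pic (F.tp y)) = G.pic (F.tp (F.Tp^[n] y)) := by
  intro n
  induction n with
  | zero => rfl
  | succ m ih =>
    set z := F.Tp^[m] y with hz
    have hzm : z ∈ Icc (0:ℝ) 1 := F.Tp_iter_mem hy m
    rw [Function.iterate_succ_apply', ih, Function.iterate_succ_apply']
    by_cases hc : F.q ≤ z
    · have h1 : G.q ≤ G.pic (F.tp z) := lemA F G hbeta G.q_mem hzm
        (by rw [← hbeta]; exact F.tp_mono F.q_mem hzm hc)
      rw [G.Tp_ge h1, pic_tp_cons F G z, decide_eq_true hc]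
      exact G.hg1 _ (G.pic_mem _)
    · have h2 : G.pic (F.tp z) < G.q := strictS F G halpha hzm (not_le.mp hc)
      rw [G.Tp_lt h2, pic_tp_cons F G z, decide_eq_false hc]
      exact G.hg0 _ (G.pic_mem _)

/-- the itinerary of the image point coincides with the itinerary of the original point. -/
lemma tau_comm (halpha : F.tm F.q = G.tm G.q) (hbeta : F.tp F.q = G.tp G.q)
    {y : ℝ} (hy : y ∈ Icc (0:ℝ) 1) :
    G.tp (G.pic (F.tp y)) = F.tp y := by
  funext n
  rw [G.tp_apply, F.tp_apply, iter_comm F G halpha hbeta hy n]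
  set z := F.Tp^[n] y with hz
  have hzm : z ∈ Icc (0:ℝ) 1 := F.Tp_iter_mem hy n
  by_cases hc : F.q ≤ z
  · rw [decide_eq_true hc, decide_eq_true (lemA F G hbeta G.q_mem hzm
      (by rw [← hbeta]; exact F.tp_mono F.q_mem hzm hc))]
  · rw [decide_eq_false hc,
      decide_eq_false (not_le.mpr (strictS F G halpha hzm (not_le.mp hc)))]

/-- the fractal transformation with the roles swapped is a left inverse. -/
lemma hinv (halpha : F.tm F.q = G.tm G.q) (hbeta : F.tp F.q = G.tp G.q)
    {y : ℝ} (hy : y ∈ Icc (0:ℝ) 1) :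
    F.pic (G.tp (G.pic (F.tp y))) = y := by
  rw [tau_comm F G halpha hbeta hy, F.pic_tp hy]

/-- the fractal transformation is monotone. -/
lemma hmono (halpha : F.tm F.q = G.tm G.q) (hbeta : F.tp F.q = G.tp G.q)
    {y z : ℝ} (hy : y ∈ Icc (0:ℝ) 1) (hz : z ∈ Icc (0:ℝ) 1) (hyz : y ≤ z) :
    G.pic (F.tp y) ≤ G.pic (F.tp z) := by
  apply lemA F G hbeta (G.pic_mem _) hz
  rw [tau_comm F G halpha hbeta hy]
  exact F.tp_mono hy hz hyz

end Two

end FracHomeo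

/-- If the critical itineraries of `F` and `G` agree, then the fractal transformation
`π_G ∘ τ_F^+` is a homeomorphism of `[0,1]`. -/
theorem stmt12
    (f0 f1 g0 g1 : ℝ → ℝ) (q : ℝ)
    (hf0m : StrictMonoOn f0 (Icc 0 1)) (hf1m : StrictMonoOn f1 (Icc 0 1))
    (hf0c : ContinuousOn f0 (Icc 0 1)) (hf1c : ContinuousOn f1 (Icc 0 1))
    (hf0map : MapsTo f0 (Icc 0 1) (Icc 0 1)) (hf1map : MapsTo f1 (Icc 0 1) (Icc 0 1))
    (hf0lip : ∃ c, 0 ≤ c ∧ c < 1 ∧ ∀ x ∈ Icc (0:ℝ) 1, ∀ y ∈ Icc (0:ℝ) 1, |f0 x - f0 y| ≤ c * |x - y|)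
    (hf1lip : ∃ c, 0 ≤ c ∧ c < 1 ∧ ∀ x ∈ Icc (0:ℝ) 1, ∀ y ∈ Icc (0:ℝ) 1, |f1 x - f1 y| ≤ c * |x - y|)
    (hf00 : f0 0 = 0) (hf11 : f1 1 = 1)
    (hf10pos : 0 < f1 0) (hoverf0f1 : f1 0 < f0 1) (hf01lt : f0 1 < 1)
    (hq : q ∈ Ioo (f1 0) (f0 1))
    (hg0 : ∀ x ∈ Icc (0:ℝ) 1, g0 (f0 x) = x) (hg1 : ∀ x ∈ Icc (0:ℝ) 1, g1 (f1 x) = x)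
    (e0 e1 k0 k1 : ℝ → ℝ) (p : ℝ)
    (he0m : StrictMonoOn e0 (Icc 0 1)) (he1m : StrictMonoOn e1 (Icc 0 1))
    (he0c : ContinuousOn e0 (Icc 0 1)) (he1c : ContinuousOn e1 (Icc 0 1))
    (he0map : MapsTo e0 (Icc 0 1) (Icc 0 1)) (he1map : MapsTo e1 (Icc 0 1) (Icc 0 1))
    (he0lip : ∃ c, 0 ≤ c ∧ c < 1 ∧ ∀ x ∈ Icc (0:ℝ) 1, ∀ y ∈ Icc (0:ℝ) 1, |e0 x - e0 y| ≤ c * |x - y|)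
    (he1lip : ∃ c, 0 ≤ c ∧ c < 1 ∧ ∀ x ∈ Icc (0:ℝ) 1, ∀ y ∈ Icc (0:ℝ) 1, |e1 x - e1 y| ≤ c * |x - y|)
    (he00 : e0 0 = 0) (he11 : e1 1 = 1)
    (he10pos : 0 < e1 0) (hovere0e1 : e1 0 < e0 1) (he01lt : e0 1 < 1)
    (hp : p ∈ Ioo (e1 0) (e0 1))
    (hk0 : ∀ x ∈ Icc (0:ℝ) 1, k0 (e0 x) = x) (hk1 : ∀ x ∈ Icc (0:ℝ) 1, k1 (e1 x) = x)
    (halpha : tauMinus g0 g1 q q = tauMinus k0 k1 p p)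
    (hbeta : tauPlus g0 g1 q q = tauPlus k0 k1 p p) :
    IsIccHomeo (fun x => piCode e0 e1 (tauPlus g0 g1 q x)) := by
  classical
  obtain ⟨c0, hc00, hc01, hlipf0⟩ := hf0lip
  obtain ⟨c1, hc10, hc11, hlipf1⟩ := hf1lip
  obtain ⟨d0, hd00, hd01, hlipe0⟩ := he0lip
  obtain ⟨d1, hd10, hd11, hlipe1⟩ := he1lip
  let SF : FracHomeo.Sys :=
    { f0 := f0, f1 := f1, g0 := g0, g1 := g1, q := q,
      hf0m := hf0m, hf1m := hf1m, hf0c := hf0c, hf1c := hf1c,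
      hf0map := hf0map, hf1map := hf1map,
      c := max c0 c1, hc0 := le_trans hc00 (le_max_left _ _), hc1 := max_lt hc01 hc11,
      hlip0 := fun x hx y hy => (hlipf0 x hx y hy).trans
        (mul_le_mul_of_nonneg_right (le_max_left _ _) (abs_nonneg _)),
      hlip1 := fun x hx y hy => (hlipf1 x hx y hy).trans
        (mul_le_mul_of_nonneg_right (le_max_right _ _) (abs_nonneg _)),
      hf00 := hf00, hf11 := hf11, hf10pos := hf10pos,
      hq1 := hq.1, hq2 := hq.2, hf01lt := hf01lt, hg0 := hg0, hg1 := hg1 }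
  let SG : FracHomeo.Sys :=
    { f0 := e0, f1 := e1, g0 := k0, g1 := k1, q := p,
      hf0m := he0m, hf1m := he1m, hf0c := he0c, hf1c := he1c,
      hf0map := he0map, hf1map := he1map,
      c := max d0 d1, hc0 := le_trans hd00 (le_max_left _ _), hc1 := max_lt hd01 hd11,
      hlip0 := fun x hx y hy => (hlipe0 x hx y hy).trans
        (mul_le_mul_of_nonneg_right (le_max_left _ _) (abs_nonneg _)),
      hlip1 := fun x hx y hy => (hlipe1 x hx y hy).trans
        (mul_le_mul_of_nonneg_right (le_max_right _ _) (abs_nonneg _)),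
      hf00 := he00, hf11 := he11, hf10pos := he10pos,
      hq1 := hp.1, hq2 := hp.2, hf01lt := he01lt, hg0 := hk0, hg1 := hk1 }
  have hha : SF.tm SF.q = SG.tm SG.q := halpha
  have hhb : SF.tp SF.q = SG.tp SG.q := hbeta
  have hha' : SG.tm SG.q = SF.tm SF.q := halpha.symm
  have hhb' : SG.tp SG.q = SF.tp SF.q := hbeta.symm
  set h : ℝ → ℝ := fun x => SG.pic (SF.tp x) with hhdef
  set h' : ℝ → ℝ := fun x => SF.pic (SG.tp x) with hh'def
  have hmapsh : MapsTo h (Icc 0 1) (Icc 0 1) := fun x _ => SG.pic_mem _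
  have hmapsh' : MapsTo h' (Icc 0 1) (Icc 0 1) := fun x _ => SF.pic_mem _
  have hlih : ∀ x ∈ Icc (0:ℝ) 1, h' (h x) = x :=
    fun x hx => FracHomeo.hinv SF SG hha hhb hx
  have hrih : ∀ x ∈ Icc (0:ℝ) 1, h (h' x) = x :=
    fun x hx => FracHomeo.hinv SG SF hha' hhb' hx
  have hmh : ∀ y z : ℝ, y ∈ Icc (0:ℝ) 1 → z ∈ Icc (0:ℝ) 1 → y ≤ z → h y ≤ h z :=
    fun y z hy hz hyz => FracHomeo.hmono SF SG hha hhb hy hz hyz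
  have hmh' : ∀ y z : ℝ, y ∈ Icc (0:ℝ) 1 → z ∈ Icc (0:ℝ) 1 → y ≤ z → h' y ≤ h' z :=
    fun y z hy hz hyz => FracHomeo.hmono SG SF hha' hhb' hy hz hyz
  haveI : OrdConnected (Icc (0:ℝ) 1) := ordConnected_Icc
  let φ : (Icc (0:ℝ) 1) ≃o (Icc (0:ℝ) 1) :=
    { toFun := fun a => ⟨h a, hmapsh a.2⟩
      invFun := fun b => ⟨h' b, hmapsh' b.2⟩
      left_inv := fun a => Subtype.ext (hlih a a.2)
      right_inv := fun b => Subtype.ext (hrih b b.2)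
      map_rel_iff' := by
        intro a b
        constructor
        · intro hab
          have h2 : h a ≤ h b := hab
          have h3 := hmh' _ _ (hmapsh a.2) (hmapsh b.2) h2
          rw [hlih a a.2, hlih b b.2] at h3
          exact h3
        · intro hab
          exact Subtype.mk_le_mk.mpr (hmh _ _ a.2 b.2 hab) }
  have hch : ContinuousOn h (Icc (0:ℝ) 1) := by
    rw [continuousOn_iff_continuous_restrict]
    have hres : (Icc (0:ℝ) 1).domRestrict h = fun a => (φ a : ℝ) := rfl
    rw [hres]
    exact continuous_subtype_val.comp φ.continuous
  have hch' : ContinuousOn h' (Icc (0:ℝ) 1) := by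
    rw [continuousOn_iff_continuous_restrict]
    have hres : (Icc (0:ℝ) 1).domRestrict h' = fun b => (φ.symm b : ℝ) := rfl
    rw [hres]
    exact continuous_subtype_val.comp φ.symm.continuous
  exact ⟨h', hch, hch', hmapsh, hmapsh', hlih, hrih⟩
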